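/- Let g(x) = (1/n)∑ᵢ vᵢ ∇fᵢ(x) with random weights vᵢ satisfying E[vᵢ] = 1, E[vᵢ²] = 1 − 1/τ + 1/(τ qᵢ), and E[vᵢvⱼ] = 1 − 1/τ for i ≠ j. Then E‖g(x)‖² = (1 − 1/τ)‖∇f(x)‖² + (1/(τ n²))∑ᵢ (1/qᵢ)‖∇fᵢ(x)‖², where ∇f(x) = (1/n)∑ᵢ ∇fᵢ(x). -/

import Mathlib

open MeasureTheory ProbabilityTheory

theorem second_moment_with_replacement {Ω : Type*} [MeasureSpace Ω]
    [IsProbabilityMeasure (ℙ : Measure Ω)] {d : ℕ}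
    (n τ : ℕ) (hn : 0 < n) (hτ : 1 ≤ τ)
    (q : Fin n → ℝ) (hq : ∀ i, 0 < q i)
    (f : Fin n → EuclideanSpace ℝ (Fin d) → ℝ)
    (hdiff : ∀ i x, DifferentiableAt ℝ (f i) x)
    (v : Fin n → Ω → ℝ)
    (hv2 : ∀ i, MemLp (v i) 2 ℙ)
    (hmean : ∀ i, ∫ ω, v i ω = 1)
    (hsq : ∀ i, ∫ ω, (v i ω) ^ 2 = 1 - 1 / τ + 1 / (τ * q i))
    (hcross : ∀ i j, i ≠ j → ∫ ω, v i ω * v j ω = 1 - 1 / τ)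
    (x : EuclideanSpace ℝ (Fin d)) :
    ∫ ω, ‖(n : ℝ)⁻¹ • ∑ i, v i ω • gradient (f i) x‖ ^ 2 =
      (1 - 1 / τ) * ‖(n : ℝ)⁻¹ • ∑ i, gradient (f i) x‖ ^ 2 +
        (1 / (τ * n ^ 2)) * ∑ i, (1 / q i) * ‖gradient (f i) x‖ ^ 2 := by
  set g : Fin n → EuclideanSpace ℝ (Fin d) := fun i => gradient (f i) x with hg
  have hint : ∀ i j, Integrable (fun ω => v i ω * v j ω) (ℙ : Measure Ω) := by
    intro i j
    have h : MemLp ((v i) • (v j)) 1 (ℙ : Measure Ω) :=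
      (hv2 j).smul (hv2 i) (hpqr := ⟨by norm_num [ENNReal.inv_two_add_inv_two]⟩)
    have := memLp_one_iff_integrable.mp h
    exact this
  -- pointwise expansion
  have hpt : ∀ ω, ‖(n : ℝ)⁻¹ • ∑ i, v i ω • g i‖ ^ 2
      = ((n : ℝ) ^ 2)⁻¹ * ∑ i, ∑ j, v i ω * v j ω * (inner ℝ (g i) (g j) : ℝ) := by
    intro ω
    rw [norm_smul, mul_pow, norm_inv, Real.norm_natCast, inv_pow]
    congr 1
    rw [← real_inner_self_eq_norm_sq, sum_inner]
    refine Finset.sum_congr rfl fun i _ => ?_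
    rw [inner_sum]
    refine Finset.sum_congr rfl fun j _ => ?_
    rw [real_inner_smul_left, real_inner_smul_right]; ring
  have hintij : ∀ i j, Integrable
      (fun ω => v i ω * v j ω * (inner ℝ (g i) (g j) : ℝ)) (ℙ : Measure Ω) :=
    fun i j => (hint i j).mul_const _
  calc ∫ ω, ‖(n : ℝ)⁻¹ • ∑ i, v i ω • g i‖ ^ 2
      = ∫ ω, ((n : ℝ) ^ 2)⁻¹ * ∑ i, ∑ j, v i ω * v j ω * (inner ℝ (g i) (g j) : ℝ) := by
        simp_rw [hpt]
    _ = ((n : ℝ) ^ 2)⁻¹ * ∫ ω, ∑ i, ∑ j, v i ω * v j ω * (inner ℝ (g i) (g j) : ℝ) :=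
        integral_const_mul _ _
    _ = ((n : ℝ) ^ 2)⁻¹ * ∑ i, ∑ j, ∫ ω, v i ω * v j ω * (inner ℝ (g i) (g j) : ℝ) := by
        rw [integral_finset_sum _ fun i _ => integrable_finset_sum _ fun j _ => hintij i j]
        congr 1
        exact Finset.sum_congr rfl fun i _ =>
          integral_finset_sum _ fun j _ => hintij i j
    _ = ((n : ℝ) ^ 2)⁻¹ * ∑ i, ∑ j,
          ((1 - 1 / τ) * (inner ℝ (g i) (g j) : ℝ)
            + if j = i then (1 / (τ * q i)) * ‖g i‖ ^ 2 else 0) := by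
        congr 1
        refine Finset.sum_congr rfl fun i _ => Finset.sum_congr rfl fun j _ => ?_
        rw [integral_mul_const]
        by_cases h : j = i
        · subst h
          have : ∫ ω, v j ω * v j ω = 1 - 1 / τ + 1 / (τ * q j) := by
            rw [← hsq j]; congr 1; ext ω; ring
          rw [this, if_pos rfl, real_inner_self_eq_norm_sq]; ring
        · rw [hcross i j (fun hh => h hh.symm), if_neg h]; ring
    _ = ((n : ℝ) ^ 2)⁻¹ * ((1 - 1 / τ) * (inner ℝ (∑ i, g i) (∑ j, g j) : ℝ)
          + ∑ i, (1 / (τ * q i)) * ‖g i‖ ^ 2) := by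
        congr 1
        rw [sum_inner]
        simp_rw [inner_sum, Finset.sum_add_distrib, Finset.sum_ite_eq', Finset.mem_univ,
          if_pos, Finset.mul_sum]
    _ = (1 - 1 / τ) * ‖(n : ℝ)⁻¹ • ∑ i, g i‖ ^ 2
          + (1 / (τ * n ^ 2)) * ∑ i, (1 / q i) * ‖g i‖ ^ 2 := by
        have hτ0 : (τ : ℝ) ≠ 0 := by positivity
        have hn0 : (n : ℝ) ≠ 0 := by positivity
        rw [norm_smul, mul_pow, norm_inv, Real.norm_natCast, inv_pow,
          real_inner_self_eq_norm_sq, mul_add, Finset.mul_sum, Finset.mul_sum]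
        congr 1
        · ring
        · refine Finset.sum_congr rfl fun i _ => ?_
          have hqi : (q i) ≠ 0 := (hq i).ne'
          rw [one_div, one_div, one_div, mul_inv, mul_inv]
          ring
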